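/- Let V be a unital associative 𝔽-algebra equipped with 2-fold derivations D₁,…,D_ℓ : V → V⊗V. For a = 0,1 let B⁽ᵃ⁾_{ij} ∈ V⊗V (1 ≤ i,j ≤ ℓ) satisfy the skewsymmetry B⁽ᵃ⁾_{ij} = −(B⁽ᵃ⁾_{ji})^σ, and define the bracket {f,g}_a := m(Σ_{i,j=1}^{ℓ} (D_j g) • B⁽ᵃ⁾_{ij} • (D_i f)^σ) ∈ V. Suppose h₀, h₁, …, h_N ∈ V satisfy the Lenard–Magri recursion {h_n, u}₀ = {h_{n+1}, u}₁ for every u ∈ V and every n = 0,…,N−1. Then {h_n, h_m}₀ ∈ [V,V] and {h_n, h_m}₁ ∈ [V,V] for all n,m ∈ {0,…,N}; that is, all the elements tr(h_n) ∈ V/[V,V] are in involution with respect to both induced brackets on V/[V,V]. -/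

import Mathlib

open TensorProduct LinearMap

section DPA

variable (𝔽 : Type) [Field 𝔽] (V : Type) [Ring V] [Algebra 𝔽 V]

/-- The swap `(u ⊗ v)^σ = v ⊗ u` on `V ⊗ V`. -/
noncomputable abbrev swap2 : V ⊗[𝔽] V ≃ₗ[𝔽] V ⊗[𝔽] V := TensorProduct.comm 𝔽 V V

/-- The cyclic permutation `(u ⊗ v ⊗ w)^σ = w ⊗ u ⊗ v` on `V ⊗ V ⊗ V = (V ⊗ V) ⊗ V`. -/
noncomputable def sigma3 : (V ⊗[𝔽] V) ⊗[𝔽] V ≃ₗ[𝔽] (V ⊗[𝔽] V) ⊗[𝔽] V :=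
  (TensorProduct.comm 𝔽 (V ⊗[𝔽] V) V).trans (TensorProduct.assoc 𝔽 V V V).symm

/-- Left multiplication `a · (u ⊗ v) = (a*u) ⊗ v` (outer bimodule structure). -/
noncomputable def lact2 (a : V) : V ⊗[𝔽] V →ₗ[𝔽] V ⊗[𝔽] V :=
  LinearMap.rTensor V (LinearMap.mulLeft 𝔽 a)

/-- Right multiplication `(u ⊗ v) · c = u ⊗ (v*c)` (outer bimodule structure). -/
noncomputable def ract2 (c : V) : V ⊗[𝔽] V →ₗ[𝔽] V ⊗[𝔽] V :=
  LinearMap.lTensor V (LinearMap.mulRight 𝔽 c)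

/-- `(u ⊗ v) ⋆₁ b = (u*b) ⊗ v`. -/
noncomputable def star1r (b : V) : V ⊗[𝔽] V →ₗ[𝔽] V ⊗[𝔽] V :=
  LinearMap.rTensor V (LinearMap.mulRight 𝔽 b)

/-- `a ⋆₁ (u ⊗ v) = u ⊗ (a*v)`. -/
noncomputable def star1l (a : V) : V ⊗[𝔽] V →ₗ[𝔽] V ⊗[𝔽] V :=
  LinearMap.lTensor V (LinearMap.mulLeft 𝔽 a)

/-- The `•`-product on `V ⊗ V`:  `(u ⊗ v) • (x ⊗ y) = (u*x) ⊗ (y*v)`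
(the multiplication of `V ⊗ Vᵒᵖ`). -/
noncomputable def bullet : V ⊗[𝔽] V →ₗ[𝔽] V ⊗[𝔽] V →ₗ[𝔽] V ⊗[𝔽] V :=
  TensorProduct.lift
    (((TensorProduct.mapBilinear (RingHom.id 𝔽) V V V V).comp (LinearMap.mul 𝔽 V)).compl₂
      ((LinearMap.mul 𝔽 V).flip))

/-- A `2`-fold bracket on `V`: an `𝔽`-bilinear map `V × V → V ⊗ V` satisfying the two
Leibniz rules `{{a,bc}} = {{a,b}}·c + b·{{a,c}}` and `{{ab,c}} = {{a,c}} ⋆₁ b + a ⋆₁ {{b,c}}`. -/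
def IsDoubleBracket (Br : V →ₗ[𝔽] V →ₗ[𝔽] V ⊗[𝔽] V) : Prop :=
  (∀ a b c : V, Br a (b * c) = ract2 𝔽 V c (Br a b) + lact2 𝔽 V b (Br a c)) ∧
  (∀ a b c : V, Br (a * b) c = star1r 𝔽 V b (Br a c) + star1l 𝔽 V a (Br b c))

variable {𝔽 V}

/-- `{{a, B}}_L` : apply the bracket to the first tensor factor. -/
noncomputable def brL (Br : V →ₗ[𝔽] V →ₗ[𝔽] V ⊗[𝔽] V) (a : V) :
    V ⊗[𝔽] V →ₗ[𝔽] (V ⊗[𝔽] V) ⊗[𝔽] V :=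
  LinearMap.rTensor V (Br a)

/-- `{{a, B}}_R` : apply the bracket to the second tensor factor. -/
noncomputable def brR (Br : V →ₗ[𝔽] V →ₗ[𝔽] V ⊗[𝔽] V) (a : V) :
    V ⊗[𝔽] V →ₗ[𝔽] (V ⊗[𝔽] V) ⊗[𝔽] V :=
  (TensorProduct.assoc 𝔽 V V V).symm.toLinearMap ∘ₗ LinearMap.lTensor V (Br a)

variable (𝔽 V)

/-- `ρ₂` : swap the last two tensor factors of `V ⊗ V ⊗ V`. -/
noncomputable def rho2 : (V ⊗[𝔽] V) ⊗[𝔽] V ≃ₗ[𝔽] (V ⊗[𝔽] V) ⊗[𝔽] V :=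
  (TensorProduct.assoc 𝔽 V V V).trans
    ((TensorProduct.congr (LinearEquiv.refl 𝔽 V) (TensorProduct.comm 𝔽 V V)).trans
      (TensorProduct.assoc 𝔽 V V V).symm)

variable {𝔽 V}

/-- Conjugated bullet action used to define the actions `•ᵢ` of `V ⊗ V` on `V ⊗ V ⊗ V`. -/
noncomputable def conjAct (β : V ⊗[𝔽] V →ₗ[𝔽] V ⊗[𝔽] V →ₗ[𝔽] V ⊗[𝔽] V)
    (ρ : (V ⊗[𝔽] V) ⊗[𝔽] V ≃ₗ[𝔽] (V ⊗[𝔽] V) ⊗[𝔽] V) :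
    V ⊗[𝔽] V →ₗ[𝔽] (V ⊗[𝔽] V) ⊗[𝔽] V →ₗ[𝔽] (V ⊗[𝔽] V) ⊗[𝔽] V :=
  (LinearMap.lcomp 𝔽 _ ρ.toLinearMap) ∘ₗ
    (LinearMap.llcomp 𝔽 ((V ⊗[𝔽] V) ⊗[𝔽] V) ((V ⊗[𝔽] V) ⊗[𝔽] V) ((V ⊗[𝔽] V) ⊗[𝔽] V)
      ρ.symm.toLinearMap) ∘ₗ
    (LinearMap.rTensorHom V) ∘ₗ β

variable (𝔽 V)

/-- The right action `X •₁ A`, i.e. `(x⊗y⊗z) •₁ (a⊗b) = x⊗(y*a)⊗(b*z)`;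
`bAct1R A X = X •₁ A`. -/
noncomputable def bAct1R : V ⊗[𝔽] V →ₗ[𝔽] (V ⊗[𝔽] V) ⊗[𝔽] V →ₗ[𝔽] (V ⊗[𝔽] V) ⊗[𝔽] V :=
  conjAct (bullet 𝔽 V).flip ((sigma3 𝔽 V).trans (sigma3 𝔽 V))

/-- The left action `A •₂ X`, i.e. `(a⊗b) •₂ (x⊗y⊗z) = (a*x)⊗y⊗(z*b)`. -/
noncomputable def bAct2L : V ⊗[𝔽] V →ₗ[𝔽] (V ⊗[𝔽] V) ⊗[𝔽] V →ₗ[𝔽] (V ⊗[𝔽] V) ⊗[𝔽] V :=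
  conjAct (bullet 𝔽 V) (rho2 𝔽 V)

/-- The right action `X •₃ A`, i.e. `(x⊗y⊗z) •₃ (a⊗b) = (x*a)⊗(b*y)⊗z`;
`bAct3R A X = X •₃ A`. -/
noncomputable def bAct3R : V ⊗[𝔽] V →ₗ[𝔽] (V ⊗[𝔽] V) ⊗[𝔽] V →ₗ[𝔽] (V ⊗[𝔽] V) ⊗[𝔽] V :=
  conjAct (bullet 𝔽 V).flip (LinearEquiv.refl 𝔽 ((V ⊗[𝔽] V) ⊗[𝔽] V))

/-- `a ⋆₁ (x⊗y⊗z) = x⊗(a*y)⊗z`. -/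
noncomputable def slot2L (a : V) : (V ⊗[𝔽] V) ⊗[𝔽] V →ₗ[𝔽] (V ⊗[𝔽] V) ⊗[𝔽] V :=
  LinearMap.rTensor V (LinearMap.lTensor V (LinearMap.mulLeft 𝔽 a))

/-- `(x⊗y⊗z) ⋆₁ b = x⊗(y*b)⊗z`. -/
noncomputable def slot2R (b : V) : (V ⊗[𝔽] V) ⊗[𝔽] V →ₗ[𝔽] (V ⊗[𝔽] V) ⊗[𝔽] V :=
  LinearMap.rTensor V (LinearMap.lTensor V (LinearMap.mulRight 𝔽 b))

/-- `a ⋆₂ (x⊗y⊗z) = x⊗y⊗(a*z)`. -/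
noncomputable def slot3L (a : V) : (V ⊗[𝔽] V) ⊗[𝔽] V →ₗ[𝔽] (V ⊗[𝔽] V) ⊗[𝔽] V :=
  LinearMap.lTensor (V ⊗[𝔽] V) (LinearMap.mulLeft 𝔽 a)

/-- `(x⊗y⊗z) ⋆₂ b = (x*b)⊗y⊗z`. -/
noncomputable def slot1R (b : V) : (V ⊗[𝔽] V) ⊗[𝔽] V →ₗ[𝔽] (V ⊗[𝔽] V) ⊗[𝔽] V :=
  LinearMap.rTensor V (LinearMap.rTensor V (LinearMap.mulRight 𝔽 b))

/-- outer left: `a · (x⊗y⊗z) = (a*x)⊗y⊗z`. -/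
noncomputable def slot1L (a : V) : (V ⊗[𝔽] V) ⊗[𝔽] V →ₗ[𝔽] (V ⊗[𝔽] V) ⊗[𝔽] V :=
  LinearMap.rTensor V (LinearMap.rTensor V (LinearMap.mulLeft 𝔽 a))

/-- outer right: `(x⊗y⊗z) · b = x⊗y⊗(z*b)`. -/
noncomputable def slot3R (b : V) : (V ⊗[𝔽] V) ⊗[𝔽] V →ₗ[𝔽] (V ⊗[𝔽] V) ⊗[𝔽] V :=
  LinearMap.lTensor (V ⊗[𝔽] V) (LinearMap.mulRight 𝔽 b)

variable {𝔽 V}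

/-- The triple bracket `{{a,b,c}}`. -/
noncomputable def triple (Br : V →ₗ[𝔽] V →ₗ[𝔽] V ⊗[𝔽] V) (a b c : V) :
    (V ⊗[𝔽] V) ⊗[𝔽] V :=
  brL Br a (Br b c) + sigma3 𝔽 V (brL Br b (Br c a)) +
    sigma3 𝔽 V (sigma3 𝔽 V (brL Br c (Br a b)))

variable (𝔽 V)

/-- Skewsymmetry of a 2-fold bracket. -/
def IsSkew (Br : V →ₗ[𝔽] V →ₗ[𝔽] V ⊗[𝔽] V) : Prop :=
  ∀ a b : V, Br a b = - swap2 𝔽 V (Br b a)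

/-- The span of commutators `[V,V]`. -/
def commSub : Submodule 𝔽 V := Submodule.span 𝔽 {x : V | ∃ a b : V, x = a * b - b * a}

variable {𝔽 V}

/-- The associated bracket `{a,b} = m {{a,b}}`. -/
noncomputable def sb (Br : V →ₗ[𝔽] V →ₗ[𝔽] V ⊗[𝔽] V) (a b : V) : V :=
  LinearMap.mul' 𝔽 V (Br a b)

/-- A 2-fold derivation: `D(ab) = (Da)·b + a·(Db)`. -/
def Is2Deriv (D : V →ₗ[𝔽] V ⊗[𝔽] V) : Prop :=
  ∀ a b : V, D (a * b) = ract2 𝔽 V b (D a) + lact2 𝔽 V a (D b)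

/-- `D` and `E` strongly commute: `D_L ∘ E = E_R ∘ D`. -/
def StronglyComm (D E : V →ₗ[𝔽] V ⊗[𝔽] V) : Prop :=
  ∀ f : V, LinearMap.rTensor V D (E f) =
    (TensorProduct.assoc 𝔽 V V V).symm (LinearMap.lTensor V E (D f))


/-- The master-formula bracket `{{f,g}} := Σ_{i,j} (D_j g) • B_{ij} • (D_i f)^σ`,
as a bundled bilinear map. -/
noncomputable def masterBr (𝔽 : Type) [Field 𝔽] (V : Type) [Ring V] [Algebra 𝔽 V]
    {ℓ : ℕ} (D : Fin ℓ → (V →ₗ[𝔽] V ⊗[𝔽] V)) (B : Fin ℓ → Fin ℓ → V ⊗[𝔽] V) :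
    V →ₗ[𝔽] V →ₗ[𝔽] V ⊗[𝔽] V :=
  ∑ i : Fin ℓ, ∑ j : Fin ℓ,
    (LinearMap.lcomp 𝔽 _ (((bullet 𝔽 V).flip (B i j)) ∘ₗ D j)) ∘ₗ
      (bullet 𝔽 V).flip ∘ₗ (swap2 𝔽 V).toLinearMap ∘ₗ D i


lemma bullet_tmul (u v x y : V) :
    bullet 𝔽 V (u ⊗ₜ v) (x ⊗ₜ y) = (u*x) ⊗ₜ[𝔽] (y*v) := rfl

lemma swap2_swap2 (X : V ⊗[𝔽] V) : swap2 𝔽 V (swap2 𝔽 V X) = X := by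
  induction X using TensorProduct.induction_on with
  | zero => simp
  | tmul u v => simp
  | add x y hx hy => simp [map_add, hx, hy]

lemma swap2_bullet (X Y : V ⊗[𝔽] V) :
    swap2 𝔽 V (bullet 𝔽 V X Y) = bullet 𝔽 V (swap2 𝔽 V Y) (swap2 𝔽 V X) := by
  induction X using TensorProduct.induction_on with
  | zero => simp
  | add x y hx hy => simp [map_add, LinearMap.add_apply, hx, hy]
  | tmul u v =>
    induction Y using TensorProduct.induction_on with
    | zero => simp
    | add x y hx hy => simp [map_add, hx, hy]
    | tmul x y => simp [bullet_tmul, TensorProduct.comm_tmul]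

lemma bullet_assoc (X Y Z : V ⊗[𝔽] V) :
    bullet 𝔽 V (bullet 𝔽 V X Y) Z = bullet 𝔽 V X (bullet 𝔽 V Y Z) := by
  induction X using TensorProduct.induction_on with
  | zero => simp
  | add x y hx hy => simp [map_add, LinearMap.add_apply, hx, hy]
  | tmul u v =>
    induction Y using TensorProduct.induction_on with
    | zero => simp
    | add x y hx hy => simp [map_add, LinearMap.add_apply, hx, hy]
    | tmul a b =>
      induction Z using TensorProduct.induction_on with
      | zero => simp
      | add x y hx hy => simp [map_add, hx, hy]
      | tmul x y => simp [bullet_tmul, mul_assoc]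

lemma masterBr_apply {ℓ : ℕ} (D : Fin ℓ → (V →ₗ[𝔽] V ⊗[𝔽] V))
    (B : Fin ℓ → Fin ℓ → V ⊗[𝔽] V) (f g : V) :
    masterBr 𝔽 V D B f g =
      ∑ i : Fin ℓ, ∑ j : Fin ℓ,
        bullet 𝔽 V (bullet 𝔽 V (D j g) (B i j)) (swap2 𝔽 V (D i f)) := by
  simp [masterBr, LinearMap.sum_apply, LinearMap.comp_apply, LinearMap.lcomp_apply,
    LinearMap.flip_apply]

lemma swap2_masterBr {ℓ : ℕ} (D : Fin ℓ → (V →ₗ[𝔽] V ⊗[𝔽] V))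
    (B : Fin ℓ → Fin ℓ → V ⊗[𝔽] V) (hskew : ∀ i j, B i j = - swap2 𝔽 V (B j i))
    (f g : V) :
    swap2 𝔽 V (masterBr 𝔽 V D B f g) = - masterBr 𝔽 V D B g f := by
  have hBs : ∀ i j, swap2 𝔽 V (B i j) = - B j i := by
    intro i j
    rw [hskew i j, map_neg, swap2_swap2]
  have step : ∀ i j : Fin ℓ,
      swap2 𝔽 V (bullet 𝔽 V (bullet 𝔽 V (D j g) (B i j)) (swap2 𝔽 V (D i f))) =
      - bullet 𝔽 V (bullet 𝔽 V (D i f) (B j i)) (swap2 𝔽 V (D j g)) := by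
    intro i j
    rw [swap2_bullet, swap2_swap2, swap2_bullet, hBs, map_neg, LinearMap.neg_apply,
      map_neg, ← bullet_assoc]
  rw [masterBr_apply, masterBr_apply, map_sum]
  calc ∑ i : Fin ℓ, swap2 𝔽 V (∑ j : Fin ℓ,
        bullet 𝔽 V (bullet 𝔽 V (D j g) (B i j)) (swap2 𝔽 V (D i f)))
      = ∑ i : Fin ℓ, ∑ j : Fin ℓ,
        - bullet 𝔽 V (bullet 𝔽 V (D i f) (B j i)) (swap2 𝔽 V (D j g)) := by
        simp only [map_sum, step]
    _ = - ∑ j : Fin ℓ, ∑ i : Fin ℓ,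
        bullet 𝔽 V (bullet 𝔽 V (D i f) (B j i)) (swap2 𝔽 V (D j g)) := by
        rw [Finset.sum_comm]
        simp [Finset.sum_neg_distrib]
    _ = - ∑ i : Fin ℓ, ∑ j : Fin ℓ,
        bullet 𝔽 V (bullet 𝔽 V (D j f) (B i j)) (swap2 𝔽 V (D i g)) := rfl

lemma mul'_sub_swap_mem (X : V ⊗[𝔽] V) :
    LinearMap.mul' 𝔽 V X - LinearMap.mul' 𝔽 V (swap2 𝔽 V X) ∈ commSub 𝔽 V := by
  induction X using TensorProduct.induction_on with
  | zero => simp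
  | tmul u v =>
    simp only [TensorProduct.comm_tmul, LinearMap.mul'_apply]
    exact Submodule.subset_span ⟨u, v, rfl⟩
  | add x y hx hy =>
    have := Submodule.add_mem _ hx hy
    simpa [map_add, add_sub_add_comm] using this

lemma skew_sum_mem {ℓ : ℕ} (D : Fin ℓ → (V →ₗ[𝔽] V ⊗[𝔽] V))
    (B : Fin ℓ → Fin ℓ → V ⊗[𝔽] V) (hskew : ∀ i j, B i j = - swap2 𝔽 V (B j i))
    (f g : V) :
    LinearMap.mul' 𝔽 V (masterBr 𝔽 V D B f g) +
      LinearMap.mul' 𝔽 V (masterBr 𝔽 V D B g f) ∈ commSub 𝔽 V := by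
  have hm := mul'_sub_swap_mem (𝔽 := 𝔽) (V := V) (masterBr 𝔽 V D B f g)
  rw [swap2_masterBr D B hskew] at hm
  simpa [map_neg, sub_neg_eq_add] using hm

lemma mem_of_add_mem {S : Submodule 𝔽 V} {x y : V} (hxy : x + y ∈ S) (hy : y ∈ S) :
    x ∈ S := by
  simpa using S.sub_mem hxy hy

lemma half_mem [CharZero 𝔽] {x : V} (hx : x + x ∈ commSub 𝔽 V) : x ∈ commSub 𝔽 V := by
  have h2 : ((2:𝔽)⁻¹) • (x + x) ∈ commSub 𝔽 V := Submodule.smul_mem _ _ hx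
  have e : ((2:𝔽)⁻¹) • (x + x) = x := by
    rw [← two_smul 𝔽 x, smul_smul, inv_mul_cancel₀ (by norm_num : (2:𝔽) ≠ 0), one_smul]
  rwa [e] at h2

/-- Lenard-Magri scheme for a pair of skewsymmetric 2-fold brackets
given by the master formula: if `{h_n, u}₀ = {h_{n+1}, u}₁` for all `u` and
`n = 0,…,N−1`, then all `{h_n, h_m}_a` lie in `[V,V]`, i.e. the `tr(h_n)` are in
involution with respect to both induced brackets. -/
theorem statement_15 (𝔽 : Type) [Field 𝔽] [CharZero 𝔽] (V : Type) [Ring V] [Algebra 𝔽 V]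
    {ℓ : ℕ} (D : Fin ℓ → (V →ₗ[𝔽] V ⊗[𝔽] V)) (hD : ∀ i, Is2Deriv (D i))
    (B0 B1 : Fin ℓ → Fin ℓ → V ⊗[𝔽] V)
    (hskew0 : ∀ i j, B0 i j = - swap2 𝔽 V (B0 j i))
    (hskew1 : ∀ i j, B1 i j = - swap2 𝔽 V (B1 j i))
    (N : ℕ) (h : ℕ → V)
    (hrec : ∀ n < N, ∀ u : V,
      LinearMap.mul' 𝔽 V (masterBr 𝔽 V D B0 (h n) u) =
        LinearMap.mul' 𝔽 V (masterBr 𝔽 V D B1 (h (n + 1)) u)) :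
    ∀ n ≤ N, ∀ m ≤ N,
      LinearMap.mul' 𝔽 V (masterBr 𝔽 V D B0 (h n) (h m)) ∈ commSub 𝔽 V ∧
      LinearMap.mul' 𝔽 V (masterBr 𝔽 V D B1 (h n) (h m)) ∈ commSub 𝔽 V := by
  have skew0 : ∀ f g : V, LinearMap.mul' 𝔽 V (masterBr 𝔽 V D B0 f g) +
      LinearMap.mul' 𝔽 V (masterBr 𝔽 V D B0 g f) ∈ commSub 𝔽 V :=
    fun f g => skew_sum_mem D B0 hskew0 f g
  have skew1 : ∀ f g : V, LinearMap.mul' 𝔽 V (masterBr 𝔽 V D B1 f g) +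
      LinearMap.mul' 𝔽 V (masterBr 𝔽 V D B1 g f) ∈ commSub 𝔽 V :=
    fun f g => skew_sum_mem D B1 hskew1 f g
  have diag0 : ∀ f : V, LinearMap.mul' 𝔽 V (masterBr 𝔽 V D B0 f f) ∈ commSub 𝔽 V :=
    fun f => half_mem (skew0 f f)
  have diag1 : ∀ f : V, LinearMap.mul' 𝔽 V (masterBr 𝔽 V D B1 f f) ∈ commSub 𝔽 V :=
    fun f => half_mem (skew1 f f)
  have claim1 : ∀ d n : ℕ, n + d ≤ N →
      LinearMap.mul' 𝔽 V (masterBr 𝔽 V D B1 (h n) (h (n + d))) ∈ commSub 𝔽 V := by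
    intro d
    induction d using Nat.strong_induction_on with
    | _ d ih =>
      intro n hn
      match d with
      | 0 => simpa using diag1 (h n)
      | 1 =>
        have e1 : LinearMap.mul' 𝔽 V (masterBr 𝔽 V D B1 (h (n + 1)) (h n)) =
            LinearMap.mul' 𝔽 V (masterBr 𝔽 V D B0 (h n) (h n)) :=
          (hrec n (by omega) (h n)).symm
        refine mem_of_add_mem (skew1 (h n) (h (n + 1))) ?_
        rw [e1]
        exact diag0 (h n)
      | (e + 2) =>
        have hz : LinearMap.mul' 𝔽 V (masterBr 𝔽 V D B0 (h n) (h (n + e + 1))) ∈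
            commSub 𝔽 V := by
          rw [hrec n (by omega) (h (n + e + 1))]
          have := ih e (by omega) (n + 1) (by omega)
          have heq : n + 1 + e = n + e + 1 := by omega
          rwa [heq] at this
        have hy : LinearMap.mul' 𝔽 V (masterBr 𝔽 V D B1 (h (n + e + 2)) (h n)) ∈
            commSub 𝔽 V := by
          rw [← hrec (n + e + 1) (by omega) (h n)]
          exact mem_of_add_mem (skew0 (h (n + e + 1)) (h n)) hz
        exact mem_of_add_mem (skew1 (h n) (h (n + (e + 2)))) (by
          have heq : n + (e + 2) = n + e + 2 := by omega
          rwa [heq])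
  have claim1' : ∀ n ≤ N, ∀ m ≤ N,
      LinearMap.mul' 𝔽 V (masterBr 𝔽 V D B1 (h n) (h m)) ∈ commSub 𝔽 V := by
    intro n hn m hm
    rcases le_or_gt n m with hle | hlt
    · have e : m = n + (m - n) := by omega
      rw [e]
      exact claim1 (m - n) n (by omega)
    · have hy : LinearMap.mul' 𝔽 V (masterBr 𝔽 V D B1 (h m) (h n)) ∈ commSub 𝔽 V := by
        have e : n = m + (n - m) := by omega
        rw [e]
        exact claim1 (n - m) m (by omega)
      exact mem_of_add_mem (skew1 (h n) (h m)) hy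
  intro n hn m hm
  refine ⟨?_, claim1' n hn m hm⟩
  rcases lt_or_eq_of_le hn with hnN | hnN
  · rw [hrec n hnN (h m)]
    exact claim1' (n + 1) (by omega) m hm
  · rcases lt_or_eq_of_le hm with hmN | hmN
    · have hy : LinearMap.mul' 𝔽 V (masterBr 𝔽 V D B0 (h m) (h n)) ∈ commSub 𝔽 V := by
        rw [hrec m hmN (h n)]
        exact claim1' (m + 1) (by omega) n hn
      exact mem_of_add_mem (skew0 (h n) (h m)) hy
    · have hnm : n = m := by omega
      rw [hnm]
      exact diag0 (h m)
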